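/- Let c > 0 and let C = { (x,y,z) ∈ ℝ³ : |y| > max( 4c·|x|, √(32c·|z|) ) }. For i = 1, 2 let t_i ≥ 0 and let α_i = (α_{i,x}, α_{i,y}, α_{i,z}): [0, t_i] → ℝ³ be Lipschitz curves such that: α_{i,x}(t) = α_{i,x}(0) + t for all t (unit x-speed); α_{i,z}'(t) = (α_{i,x}(t)·α_{i,y}'(t) − α_{i,y}(t)·α_{i,x}'(t))/2 for almost every t (horizontality); the function y∘α_i is Lipschitz with constant < c; α₁(0) = α₂(0); and the projections do not cross, i.e., either α_{1,y}(t) ≤ α_{2,y}(t) for all t ∈ [0, min(t₁,t₂)] or α_{1,y}(t) ≥ α_{2,y}(t) for all t ∈ [0, min(t₁,t₂)]. Let p_i = α_i(t_i). Then p₁⁻¹·p₂ ∉ C, where the inverse and product are taken in the Heisenberg group. -/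

import Mathlib

open MeasureTheory Set

open Filter Topology

/-- The Heisenberg group product on `ℝ³`. -/
noncomputable def hmul (p q : ℝ × ℝ × ℝ) : ℝ × ℝ × ℝ :=
  (p.1 + q.1, p.2.1 + q.2.1, p.2.2 + q.2.2 + (p.1 * q.2.1 - p.2.1 * q.1) / 2)

/-- The Heisenberg group inverse on `ℝ³`. -/
noncomputable def hinv (p : ℝ × ℝ × ℝ) : ℝ × ℝ × ℝ := (-p.1, -p.2.1, -p.2.2)



lemma ae_mem_Ioo {a b : ℝ} :
    ∀ᵐ t ∂(volume.restrict (Icc a b)), t ∈ Ioo a b := by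
  have h0 : volume (Icc a b \ Ioo a b) = 0 := by
    apply measure_mono_null (t := ({a, b} : Set ℝ)) ?_ ((Set.toFinite _).measure_zero _)
    intro x hx
    rcases hx with ⟨⟨h1, h2⟩, h3⟩
    simp only [mem_Ioo, not_and_or, not_lt] at h3
    rcases h3 with h | h
    · exact Or.inl (le_antisymm h h1)
    · exact Or.inr (le_antisymm h2 h)
  have h1 : ∀ᵐ t ∂(volume.restrict (Icc a b)), t ∈ Icc a b :=
    ae_restrict_mem measurableSet_Icc
  have h2 : ∀ᵐ t ∂(volume.restrict (Icc a b)), t ∉ Icc a b \ Ioo a b :=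
    ae_restrict_of_ae (measure_eq_zero_iff_ae_notMem.1 h0)
  filter_upwards [h1, h2] with t ht hnt
  by_contra hcon
  exact hnt ⟨ht, hcon⟩

lemma key_global {a b : ℝ} (hab : a < b) {K : NNReal} {w : ℝ → ℝ} (hw : LipschitzWith K w)
    (hd : ∀ᵐ t ∂(volume.restrict (Icc a b)), ∃ d, HasDerivAt w d t ∧ d ≤ 0) :
    w b ≤ w a := by
  classical
  set P : ℝ → Prop := fun t => ∃ d, HasDerivAt w d t ∧ d ≤ 0 with hP
  set D : ℝ → ℝ := fun t => if h : P t then h.choose else 0 with hDdef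
  have hD : ∀ t, P t → HasDerivAt w (D t) t ∧ D t ≤ 0 := by
    intro t h
    simp only [hDdef, dif_pos h]
    exact h.choose_spec
  set h : ℕ → ℝ := fun n => (n + 1 : ℝ)⁻¹ with hhdef
  have hpos : ∀ n, 0 < h n := fun n => by positivity
  have hto0 : Tendsto h atTop (nhds 0) := by
    simpa [hhdef, one_div] using (tendsto_one_div_add_atTop_nhds_zero_nat : Tendsto (fun n : ℕ => 1 / ((n : ℝ) + 1)) atTop (𝓝 0))
  have contw : Continuous w := hw.continuous
  have slope_tendsto : ∀ (f : ℝ → ℝ) (t d : ℝ), HasDerivAt f d t →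
      Tendsto (fun n => (f (t + h n) - f t) / h n) atTop (nhds d) := by
    intro f t d hder
    have hsl := hasDerivAt_iff_tendsto_slope.1 hder
    have htend : Tendsto (fun n => t + h n) atTop (nhdsWithin t {t}ᶜ) := by
      apply tendsto_nhdsWithin_of_tendsto_nhds_of_eventually_within
      · simpa using tendsto_const_nhds.add hto0
      · exact Eventually.of_forall fun n => by
          simp only [mem_compl_singleton_iff]
          exact ne_of_gt (by linarith [hpos n])
    have h2 := hsl.comp htend
    apply h2.congr
    intro n
    simp [Function.comp, slope_def_field]
  set F : ℕ → ℝ → ℝ := fun n t => (w (t + h n) - w t) / h n with hFdef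
  have contFn : ∀ n, Continuous (F n) :=
    fun n => ((contw.comp (continuous_id.add continuous_const)).sub contw).div_const _
  have hint : ∀ x y : ℝ, IntervalIntegrable w volume x y := fun x y =>
    contw.intervalIntegrable x y
  set G : ℝ → ℝ := fun x => ∫ t in a..x, w t with hGdef
  have key_eq : ∀ n, (∫ t in a..b, F n t) =
      ((G (b + h n) - G b) - (G (a + h n) - G a)) / h n := by
    intro n
    have e1 : (∫ t in a..b, w (t + h n)) = ∫ t in (a + h n)..(b + h n), w t :=
      intervalIntegral.integral_comp_add_right (fun t => w t) (h n)
    have e2 : (∫ t in a..b, F n t) =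
        ((∫ t in a..b, w (t + h n)) - ∫ t in a..b, w t) / h n := by
      rw [← intervalIntegral.integral_sub
          ((by fun_prop : Continuous fun t : ℝ => w (t + h n)).intervalIntegrable a b)
          (hint a b),
        ← intervalIntegral.integral_div]
    have e3 : G (b + h n) - G (a + h n) = ∫ t in (a + h n)..(b + h n), w t :=
      intervalIntegral.integral_interval_sub_left (hint a (b + h n)) (hint a (a + h n))
    have e4 : G b - G a = ∫ t in a..b, w t := by
      have := intervalIntegral.integral_interval_sub_left (hint a b) (hint a a)
      simpa [hGdef] using this
    rw [e2, e1, ← e3,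
      show ((G (b + h n) - G b) - (G (a + h n) - G a))
        = (G (b + h n) - G (a + h n)) - (G b - G a) by ring, e4]
  have hGderiv : ∀ x : ℝ, HasDerivAt G (w x) x := fun x =>
    intervalIntegral.integral_hasDerivAt_right (hint a x)
      (contw.stronglyMeasurable.stronglyMeasurableAtFilter) contw.continuousAt
  have tend1 : Tendsto (fun n => ∫ t in a..b, F n t) atTop (nhds (w b - w a)) := by
    have hb := slope_tendsto G b (w b) (hGderiv b)
    have ha := slope_tendsto G a (w a) (hGderiv a)
    have he : ∀ n, (G (b + h n) - G b) / h n - (G (a + h n) - G a) / h n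
        = ∫ t in a..b, F n t := by
      intro n
      rw [key_eq n]
      ring
    exact Tendsto.congr he (hb.sub ha)
  have tend2 : Tendsto (fun n => ∫ t in a..b, F n t) atTop (nhds (∫ t in a..b, D t)) := by
    apply intervalIntegral.tendsto_integral_filter_of_dominated_convergence (fun _ => (K : ℝ))
    · exact Eventually.of_forall fun n => (contFn n).aestronglyMeasurable
    · apply Eventually.of_forall
      intro n
      apply Eventually.of_forall
      intro t _
      simp only [hFdef, norm_div, Real.norm_eq_abs]
      rw [abs_of_pos (hpos n), div_le_iff₀ (hpos n)]
      have h5 := hw.dist_le_mul (t + h n) t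
      rw [Real.dist_eq, Real.dist_eq] at h5
      simpa [abs_of_pos (hpos n)] using h5
    · exact intervalIntegrable_const
    · have hd' : ∀ᵐ t : ℝ ∂volume, t ∈ Icc a b → P t :=
        (ae_restrict_iff' measurableSet_Icc).1 hd
      filter_upwards [hd'] with t ht htI
      have htmem : t ∈ Icc a b := by
        rw [uIoc_of_le hab.le] at htI
        exact Ioc_subset_Icc_self htI
      exact slope_tendsto w t (D t) (hD t (ht htmem)).1
  have hDle : (∫ t in a..b, D t) ≤ 0 := by
    rw [intervalIntegral.integral_of_le hab.le]
    apply integral_nonpos_of_ae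
    have hd' : ∀ᵐ t ∂(volume.restrict (Ioc a b)), P t :=
      ae_restrict_of_ae_restrict_of_subset Ioc_subset_Icc_self hd
    filter_upwards [hd'] with t ht
    exact (hD t ht).2
  have huniq := tendsto_nhds_unique tend1 tend2
  linarith [huniq ▸ hDle]

/-- Main monotonicity tool: a function Lipschitz on `[a,b]` whose a.e. derivative is `≤ 0`
is decreasing across the interval. -/
lemma key {a b : ℝ} (hab : a ≤ b) {w : ℝ → ℝ}
    (hw : ∃ K : NNReal, LipschitzOnWith K w (Icc a b))
    (hd : ∀ᵐ t ∂(volume.restrict (Icc a b)), ∃ d, HasDerivAt w d t ∧ d ≤ 0) :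
    w b ≤ w a := by
  rcases eq_or_lt_of_le hab with rfl | hab
  · exact le_refl _
  obtain ⟨K, hK⟩ := hw
  obtain ⟨g, hg, heq⟩ := hK.extend_real
  have ha : w a = g a := heq (left_mem_Icc.2 hab.le)
  have hb : w b = g b := heq (right_mem_Icc.2 hab.le)
  rw [ha, hb]
  apply key_global hab hg
  filter_upwards [hd, ae_mem_Ioo] with t ht htIoo
  obtain ⟨d, hder, hdle⟩ := ht
  refine ⟨d, ?_, hdle⟩
  apply hder.congr_of_eventuallyEq
  filter_upwards [Ioo_mem_nhds htIoo.1 htIoo.2] with u hu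
  exact (heq (Ioo_subset_Icc_self hu)).symm

/-- Existence-form Lipschitz-on algebra -/
lemma exK_of_dist {s : Set ℝ} {f : ℝ → ℝ} (C : ℝ)
    (h : ∀ x ∈ s, ∀ y ∈ s, |f x - f y| ≤ C * |x - y|) :
    ∃ K : NNReal, LipschitzOnWith K f s := by
  refine ⟨C.toNNReal, LipschitzOnWith.of_dist_le_mul fun x hx y hy => ?_⟩
  rw [Real.dist_eq, Real.dist_eq]
  calc |f x - f y| ≤ C * |x - y| := h x hx y hy
    _ ≤ C.toNNReal * |x - y| := by
        exact mul_le_mul_of_nonneg_right (Real.le_coe_toNNReal C) (abs_nonneg _)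

lemma exK_add {s : Set ℝ} {f g : ℝ → ℝ}
    (hf : ∃ K : NNReal, LipschitzOnWith K f s) (hg : ∃ K : NNReal, LipschitzOnWith K g s) :
    ∃ K : NNReal, LipschitzOnWith K (fun t => f t + g t) s := by
  obtain ⟨Kf, hf⟩ := hf
  obtain ⟨Kg, hg⟩ := hg
  apply exK_of_dist ((Kf : ℝ) + Kg)
  intro x hx y hy
  have h1 := hf.dist_le_mul x hx y hy
  have h2 := hg.dist_le_mul x hx y hy
  rw [Real.dist_eq, Real.dist_eq] at h1 h2
  calc |f x + g x - (f y + g y)| ≤ |f x - f y| + |g x - g y| := by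
        rw [show f x + g x - (f y + g y) = (f x - f y) + (g x - g y) by ring]
        exact abs_add_le _ _
    _ ≤ (Kf : ℝ) * |x - y| + Kg * |x - y| := add_le_add h1 h2
    _ = ((Kf : ℝ) + Kg) * |x - y| := by ring

lemma exK_neg {s : Set ℝ} {f : ℝ → ℝ}
    (hf : ∃ K : NNReal, LipschitzOnWith K f s) :
    ∃ K : NNReal, LipschitzOnWith K (fun t => -f t) s := by
  obtain ⟨Kf, hf⟩ := hf
  apply exK_of_dist (Kf : ℝ)
  intro x hx y hy
  have h1 := hf.dist_le_mul x hx y hy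
  rw [Real.dist_eq, Real.dist_eq] at h1
  simpa [abs_sub_comm, neg_add_eq_sub] using h1

lemma exK_sub {s : Set ℝ} {f g : ℝ → ℝ}
    (hf : ∃ K : NNReal, LipschitzOnWith K f s) (hg : ∃ K : NNReal, LipschitzOnWith K g s) :
    ∃ K : NNReal, LipschitzOnWith K (fun t => f t - g t) s := by
  have := exK_add hf (exK_neg hg)
  simpa [sub_eq_add_neg] using this

lemma exK_mul {a b : ℝ} {f g : ℝ → ℝ}
    (hf : ∃ K : NNReal, LipschitzOnWith K f (Icc a b))
    (hg : ∃ K : NNReal, LipschitzOnWith K g (Icc a b)) :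
    ∃ K : NNReal, LipschitzOnWith K (fun t => f t * g t) (Icc a b) := by
  obtain ⟨Kf, hf⟩ := hf
  obtain ⟨Kg, hg⟩ := hg
  obtain ⟨Bf, hBf⟩ := (isCompact_Icc.image_of_continuousOn hf.continuousOn).isBounded.subset_closedBall 0
  obtain ⟨Bg, hBg⟩ := (isCompact_Icc.image_of_continuousOn hg.continuousOn).isBounded.subset_closedBall 0
  have hbf : ∀ x ∈ Icc a b, |f x| ≤ |Bf| := by
    intro x hx
    have := hBf (mem_image_of_mem f hx)
    simp [Real.closedBall_eq_Icc, abs_le] at this ⊢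
    constructor <;> [linarith [this.1, this.2, neg_abs_le Bf, le_abs_self Bf]; linarith [this.1, this.2, neg_abs_le Bf, le_abs_self Bf]]
  have hbg : ∀ x ∈ Icc a b, |g x| ≤ |Bg| := by
    intro x hx
    have := hBg (mem_image_of_mem g hx)
    simp [Real.closedBall_eq_Icc, abs_le] at this ⊢
    constructor <;> [linarith [this.1, this.2, neg_abs_le Bg, le_abs_self Bg]; linarith [this.1, this.2, neg_abs_le Bg, le_abs_self Bg]]
  apply exK_of_dist ((Kf : ℝ) * |Bg| + |Bf| * Kg)
  intro x hx y hy
  have h1 := hf.dist_le_mul x hx y hy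
  have h2 := hg.dist_le_mul x hx y hy
  rw [Real.dist_eq, Real.dist_eq] at h1 h2
  calc |f x * g x - f y * g y| = |(f x - f y) * g y + f x * (g x - g y)| := by ring_nf
    _ ≤ |(f x - f y) * g y| + |f x * (g x - g y)| := abs_add_le _ _
    _ = |f x - f y| * |g y| + |f x| * |g x - g y| := by rw [abs_mul, abs_mul]
    _ ≤ ((Kf : ℝ) * |x - y|) * |Bg| + |Bf| * ((Kg : ℝ) * |x - y|) := by
        apply add_le_add
        · exact mul_le_mul h1 (hbg y hy) (abs_nonneg _) (by positivity)
        · exact mul_le_mul (hbf x hx) h2 (abs_nonneg _) (abs_nonneg _)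
    _ = ((Kf : ℝ) * |Bg| + |Bf| * Kg) * |x - y| := by ring

lemma exK_affine {s : Set ℝ} (p q : ℝ) :
    ∃ K : NNReal, LipschitzOnWith K (fun t => p + q * t) s := by
  apply exK_of_dist |q|
  intro x hx y hy
  rw [show p + q * x - (p + q * y) = q * (x - y) by ring, abs_mul]

lemma exK_const {s : Set ℝ} (p : ℝ) :
    ∃ K : NNReal, LipschitzOnWith K (fun _ => p) s := by
  apply exK_of_dist 0
  intro x hx y hy
  simp

lemma exK_max0 {s : Set ℝ} {f : ℝ → ℝ}
    (hf : ∃ K : NNReal, LipschitzOnWith K f s) :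
    ∃ K : NNReal, LipschitzOnWith K (fun t => max 0 (f t)) s := by
  obtain ⟨Kf, hf⟩ := hf
  apply exK_of_dist (Kf : ℝ)
  intro x hx y hy
  have h1 := hf.dist_le_mul x hx y hy
  rw [Real.dist_eq, Real.dist_eq] at h1
  rw [max_comm 0 (f x), max_comm 0 (f y)]
  exact le_trans (abs_max_sub_max_le_abs _ _ _) h1

/-- derivative of `(max 0 x)^2` -/
lemma hasDerivAt_maxsq (x : ℝ) :
    HasDerivAt (fun y : ℝ => (max 0 y)^2) (2 * max 0 x) x := by
  rcases lt_trichotomy x 0 with hx | hx | hx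
  · have : (fun y : ℝ => (0 : ℝ)) =ᶠ[nhds x] fun y => (max 0 y)^2 := by
      filter_upwards [Iio_mem_nhds hx] with y hy
      rw [max_eq_left (le_of_lt hy)]
      simp
    rw [max_eq_left hx.le, mul_zero]
    exact this.hasDerivAt_iff.1 (hasDerivAt_const x 0)
  · subst hx
    rw [max_self, mul_zero]
    rw [hasDerivAt_iff_tendsto]
    have hb : ∀ y : ℝ, ‖y - 0‖⁻¹ * ‖(max 0 y)^2 - (max 0 (0:ℝ))^2 - (y - 0) * 0‖ ≤ |y| := by
      intro y
      rcases eq_or_ne y 0 with rfl | hy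
      · simp
      · simp only [sub_zero, mul_zero, max_self, ne_eq]
        rw [Real.norm_eq_abs, Real.norm_eq_abs]
        rw [inv_mul_le_iff₀ (abs_pos.2 hy)]
        have : |(max 0 y)^2 - 0^2| = (max 0 y)^2 := by
          simp [abs_of_nonneg, sq_nonneg]
        rw [this]
        have hmy : max 0 y ≤ |y| := max_le (abs_nonneg y) (le_abs_self y)
        calc (max 0 y)^2 = max 0 y * max 0 y := sq (max 0 y) ▸ by ring
          _ ≤ |y| * |y| := mul_le_mul hmy hmy (le_max_left _ _) (abs_nonneg _)
    apply squeeze_zero (fun y => by positivity) hb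
    have : Tendsto (fun y : ℝ => |y|) (nhds 0) (nhds |0|) := continuous_abs.continuousAt
    simpa using this
  · have : (fun y : ℝ => y^2) =ᶠ[nhds x] fun y => (max 0 y)^2 := by
      filter_upwards [Ioi_mem_nhds hx] with y hy
      rw [max_eq_right (le_of_lt hy)]
    rw [max_eq_right hx.le]
    exact this.hasDerivAt_iff.1 (by simpa [mul_comm] using hasDerivAt_pow 2 x)

lemma tailArith (c D Δ qy qz : ℝ) (hc : 0 < c) (hΔ0 : 0 ≤ Δ)
    (hqzub : qz ≤ -(D^2/(4*c)) - Δ * qy / 2 + c * Δ^2 / 2)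
    (hH1 : 4 * c * Δ < qy) (hH2 : Real.sqrt (32 * c * |qz|) < qy)
    (hDlow : 3 * qy < 4 * D) (hqypos : 0 < qy) : False := by
  have hΔqy : 4 * (c * Δ^2) ≤ Δ * qy := by
    have h2 : Δ * (4 * c * Δ) ≤ Δ * qy := mul_le_mul_of_nonneg_left (le_of_lt hH1) hΔ0
    have he2 : Δ * (4 * c * Δ) = 4 * (c * Δ^2) := by ring
    linarith only [h2, he2]
  have hDpos : 0 < D := by linarith only [hDlow, hqypos]
  have hDD : 0 < D^2/(4*c) := div_pos (pow_pos hDpos 2) (by linarith)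
  have hcΔ2 : 0 ≤ c * Δ^2 := by positivity
  have hqzneg : qz < 0 := by linarith only [hqzub, hΔqy, hDD, hcΔ2]
  have habs : |qz| = -qz := abs_of_neg hqzneg
  have hsq2 : 32 * c * |qz| < qy^2 := by
    have := (Real.sqrt_lt' hqypos).1 hH2
    linarith only [this]
  have h8D : 8 * D^2 ≤ 32 * c * |qz| := by
    rw [habs]
    have hle' : D^2/(4*c) ≤ -qz := by linarith only [hqzub, hΔqy, hcΔ2]
    have h32 := mul_le_mul_of_nonneg_left hle' (by positivity : (0:ℝ) ≤ 32 * c)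
    have he : 32 * c * (D^2/(4*c)) = 8 * D^2 := by field_simp; ring
    linarith only [h32, he]
  have hprod : 0 < (4*D - 3*qy) * (4*D + 3*qy) :=
    mul_pos (by linarith only [hDlow] : (0:ℝ) < 4*D - 3*qy)
      (by linarith only [hDlow, hqypos] : (0:ℝ) < 4*D + 3*qy)
  have hexp : (4*D - 3*qy) * (4*D + 3*qy) = 16*D^2 - 9*qy^2 := by ring
  linarith only [hprod, hexp, h8D, hsq2, sq_nonneg qy]

set_option maxHeartbeats 2000000 in
lemma core (c x0 T0 T1 : ℝ) (hc : 0 < c) (hT0 : 0 ≤ T0) (hle : T0 ≤ T1)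
    (y1 z1 y2 z2 : ℝ → ℝ)
    (hy1 : LipschitzOnWith c.toNNReal y1 (Icc 0 T0))
    (hy2 : LipschitzOnWith c.toNNReal y2 (Icc 0 T1))
    (hz1 : ∃ K : NNReal, LipschitzOnWith K z1 (Icc 0 T0))
    (hz2 : ∃ K : NNReal, LipschitzOnWith K z2 (Icc 0 T1))
    (hy0 : y1 0 = y2 0) (hz0 : z1 0 = z2 0)
    (horder : ∀ t ∈ Icc 0 T0, y1 t ≤ y2 t)
    (hh1 : ∀ᵐ t ∂(volume.restrict (Icc 0 T0)),
      ∃ yd, HasDerivAt y1 yd t ∧ HasDerivAt z1 (((x0 + t) * yd - y1 t) / 2) t)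
    (hh2 : ∀ᵐ t ∂(volume.restrict (Icc 0 T1)),
      ∃ yd, HasDerivAt y2 yd t ∧ HasDerivAt z2 (((x0 + t) * yd - y2 t) / 2) t)
    (H : max (4 * c * |T1 - T0|)
        (Real.sqrt (32 * c * |z2 T1 - z1 T0 + (y1 T0 * (x0 + T1) - (x0 + T0) * y2 T1) / 2|))
        < |y2 T1 - y1 T0|) : False := by
  have hT1 : 0 ≤ T1 := hT0.trans hle
  set a : ℝ := y1 T0 with ha
  set b : ℝ := y2 T1 with hb
  set g0 : ℝ := y2 T0 with hg0
  set D : ℝ := g0 - a with hD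
  set Δ : ℝ := T1 - T0 with hΔ
  set qy : ℝ := b - a with hqy
  set qz : ℝ := z2 T1 - z1 T0 + (a * (x0 + T1) - (x0 + T0) * b) / 2 with hqz
  have hΔ0 : 0 ≤ Δ := by simp [hΔ]; linarith
  have hcoe : (c.toNNReal : ℝ) = c := Real.coe_toNNReal c hc.le
  -- membership facts
  have hmemT0 : T0 ∈ Icc 0 T0 := ⟨hT0, le_refl _⟩
  have hmem0 : (0:ℝ) ∈ Icc 0 T0 := ⟨le_refl _, hT0⟩
  have hmemT0' : T0 ∈ Icc 0 T1 := ⟨hT0, hle⟩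
  have hmemT1 : T1 ∈ Icc 0 T1 := ⟨hT1, le_refl _⟩
  have hmem0' : (0:ℝ) ∈ Icc 0 T1 := ⟨le_refl _, hT1⟩
  -- Lipschitz distance helper
  have hdist : ∀ (f : ℝ → ℝ) (U : ℝ), LipschitzOnWith c.toNNReal f (Icc 0 U) →
      ∀ x ∈ Icc 0 U, ∀ y ∈ Icc 0 U, |f x - f y| ≤ c * |x - y| := by
    intro f U hf x hx y hy
    have := hf.dist_le_mul x hx y hy
    rw [Real.dist_eq, Real.dist_eq, hcoe] at this
    exact this
  -- F1
  have F1 : |b - g0| ≤ c * Δ := by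
    have := hdist y2 T1 hy2 T1 hmemT1 T0 hmemT0'
    rwa [abs_of_nonneg (by linarith : (0:ℝ) ≤ T1 - T0)] at this
  -- F2
  have F2 : 0 ≤ D := by
    have := horder T0 hmemT0
    simp [hD, hg0, ha]
    linarith only [this]
  -- F3
  have F3 : D ≤ 2 * c * T0 := by
    have h1 := hdist y2 T1 hy2 T0 hmemT0' 0 hmem0'
    have h2 := hdist y1 T0 hy1 T0 hmemT0 0 hmem0
    rw [sub_zero, abs_of_nonneg hT0] at h1 h2
    have h1' := abs_le.1 h1
    have h2' := abs_le.1 h2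
    simp only [hD, hg0, ha]
    have := hy0
    linarith only [h1'.1, h1'.2, h2'.1, h2'.2, this]
  -- F4
  have F4 : ∀ t ∈ Icc 0 T0, max 0 (D - 2 * c * (T0 - t)) ≤ y2 t - y1 t := by
    intro t ht
    apply max_le
    · linarith only [horder t ht]
    · have h1 := hdist y2 T1 hy2 T0 hmemT0' t ⟨ht.1, ht.2.trans hle⟩
      have h2 := hdist y1 T0 hy1 T0 hmemT0 t ht
      have hnn : (0:ℝ) ≤ T0 - t := by linarith [ht.2]
      rw [abs_of_nonneg hnn] at h1 h2
      have h1' := abs_le.1 h1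
      have h2' := abs_le.1 h2
      simp only [hD, hg0, ha]
      linarith only [h1'.1, h1'.2, h2'.1, h2'.2]
  -- from H
  have hΔabs : |T1 - T0| = Δ := abs_of_nonneg hΔ0
  have hH1 : 4 * c * Δ < |qy| := by
    have := (max_lt_iff.1 H).1
    rwa [hΔabs] at this
  have hH2 : Real.sqrt (32 * c * |qz|) < |qy| := (max_lt_iff.1 H).2
  have hqyabs : 0 < |qy| := lt_of_le_of_lt (by positivity) hH1
  -- qy > 0
  have hbg : qy - D = b - g0 := by rw [hqy, hD]; ring
  have hqypos : 0 < qy := by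
    rcases abs_cases qy with ⟨he, _⟩ | ⟨he, hneg⟩
    · exact he ▸ hqyabs
    · exfalso
      have h1 := (abs_le.1 F1).1
      rw [← hbg] at h1
      have hcΔ0 : 0 ≤ c * Δ := mul_nonneg hc.le hΔ0
      rw [he] at hH1
      linarith only [h1, F2, hH1, hcΔ0]
  have hqyeq : |qy| = qy := abs_of_pos hqypos
  rw [hqyeq] at hH1 hH2
  have hDlow : 3 * qy < 4 * D := by
    have h1 := (abs_le.1 F1).2
    rw [← hbg] at h1
    linarith only [h1, hH1]
  have hDhigh : D ≤ qy + c * Δ := by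
    have h1 := (abs_le.1 F1).1
    rw [← hbg] at h1
    linarith only [h1]
  -- Step A
  set m : ℝ → ℝ := fun t => max 0 (D - 2 * c * (T0 - t)) with hm
  set W : ℝ → ℝ := fun t =>
    z2 t - z1 t - (x0 + t) * (y2 t - y1 t) * (1/2) + (max 0 (D - 2 * c * (T0 - t)))^2 * (1/(4*c))
    with hW
  have hy2r : LipschitzOnWith c.toNNReal y2 (Icc 0 T0) := hy2.mono (Icc_subset_Icc_right hle)
  have hz2r : ∃ K : NNReal, LipschitzOnWith K z2 (Icc 0 T0) := by
    obtain ⟨K, hK⟩ := hz2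
    exact ⟨K, hK.mono (Icc_subset_Icc_right hle)⟩
  have hx0t : ∀ U V : ℝ, ∃ K : NNReal, LipschitzOnWith K (fun t => x0 + t) (Icc U V) := by
    intro U V
    apply exK_of_dist 1
    intro x hx y hy
    rw [one_mul]
    apply le_of_eq
    congr 1
    ring
  have hmlip : ∃ K : NNReal, LipschitzOnWith K m (Icc 0 T0) := by
    apply exK_max0
    apply exK_of_dist (2*c)
    intro x hx y hy
    rw [show D - 2*c*(T0 - x) - (D - 2*c*(T0 - y)) = 2*c*(x - y) by ring, abs_mul,
      abs_of_nonneg (by positivity : (0:ℝ) ≤ 2*c)]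
  have hWlip : ∃ K : NNReal, LipschitzOnWith K W (Icc 0 T0) := by
    have eW : W = fun t => (z2 t - z1 t - (x0 + t) * ((y2 t - y1 t) * (1/2)))
        + (m t * (m t * (1/(4*c)))) := by
      funext t
      simp only [hW, hm]
      ring
    rw [eW]
    exact exK_add (exK_sub (exK_sub hz2r hz1)
        (exK_mul (hx0t 0 T0) (exK_mul (exK_sub ⟨_, hy2r⟩ ⟨_, hy1⟩) (exK_const _))))
      (exK_mul hmlip (exK_mul hmlip (exK_const _)))
  -- a.e. derivative of W on Icc 0 T0 is ≤ 0
  have hWd : ∀ᵐ t ∂(volume.restrict (Icc 0 T0)), ∃ d, HasDerivAt W d t ∧ d ≤ 0 := by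
    filter_upwards [hh1, ae_restrict_of_ae_restrict_of_subset
      (Icc_subset_Icc_right hle) hh2, ae_restrict_mem measurableSet_Icc] with t ht1 ht2 htI
    obtain ⟨yd1, hy1d, hz1d⟩ := ht1
    obtain ⟨yd2, hy2d, hz2d⟩ := ht2
    have hxd : HasDerivAt (fun u : ℝ => x0 + u) 1 t := (hasDerivAt_id t).const_add x0
    have hprod : HasDerivAt (fun u => (x0 + u) * (y2 u - y1 u))
        (1 * (y2 t - y1 t) + (x0 + t) * (yd2 - yd1)) t := hxd.mul (hy2d.sub hy1d)
    have hprod2 := hprod.mul_const (1/2 : ℝ)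
    have hzd := hz2d.sub hz1d
    have hℓ : HasDerivAt (fun u => D - 2 * c * (T0 - u)) (-(2 * c * (-1))) t :=
      (((hasDerivAt_id t).const_sub T0).const_mul (2*c)).const_sub D
    have hmaxd : HasDerivAt (fun u => (max 0 (D - 2 * c * (T0 - u)))^2)
        (2 * max 0 (D - 2 * c * (T0 - t)) * (-(2 * c * (-1)))) t := by
      have := (hasDerivAt_maxsq (D - 2 * c * (T0 - t))).comp t hℓ
      exact this
    have hmaxd2 := hmaxd.mul_const (1/(4*c))
    refine ⟨_, ((hzd.sub hprod2).add hmaxd2), ?_⟩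
    have hsimp : ((x0 + t) * yd2 - y2 t) / 2 - ((x0 + t) * yd1 - y1 t) / 2
        - (1 * (y2 t - y1 t) + (x0 + t) * (yd2 - yd1)) * (1/2)
        + 2 * max 0 (D - 2 * c * (T0 - t)) * (-(2 * c * (-1))) * (1/(4*c))
        = -(y2 t - y1 t) + max 0 (D - 2 * c * (T0 - t)) := by
      field_simp
      ring
    rw [hsimp]
    linarith only [F4 t htI]
  have hAkey := key hT0 hWlip hWd
  have hW0 : W 0 = 0 := by
    simp only [hW]
    rw [max_eq_left (by linarith only [F3] : D - 2 * c * (T0 - 0) ≤ 0)]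
    rw [hz0, hy0]
    ring
  have hWT0 : W T0 = z2 T0 - z1 T0 - (x0 + T0) * D * (1/2) + D^2 * (1/(4*c)) := by
    simp only [hW]
    rw [show T0 - T0 = 0 by ring, mul_zero, sub_zero, max_eq_right F2]
    try rw [hD, hg0, ha]
    try ring
  have hA : z2 T0 - z1 T0 - ((x0 + T0) * D / 2 - D^2 / (4*c)) ≤ 0 := by
    have h := hAkey
    rw [hWT0, hW0] at h
    have e1 : (x0 + T0) * D * (1/2) = (x0 + T0) * D / 2 := by ring
    have e2 : D^2 * (1/(4*c)) = D^2 / (4*c) := by ring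
    linarith only [h, e1, e2]
  -- Step B
  set V : ℝ → ℝ := fun t =>
    z2 t - (x0 + t) * y2 t * (1/2) + b * t + c * (T1 - t)^2 * (1/2) with hV
  have hy2s : LipschitzOnWith c.toNNReal y2 (Icc T0 T1) := hy2.mono (Icc_subset_Icc_left hT0)
  have hz2s : ∃ K : NNReal, LipschitzOnWith K z2 (Icc T0 T1) := by
    obtain ⟨K, hK⟩ := hz2
    exact ⟨K, hK.mono (Icc_subset_Icc_left hT0)⟩
  have hVlip : ∃ K : NNReal, LipschitzOnWith K V (Icc T0 T1) := by
    have eV : V = fun t => (z2 t - (x0 + t) * (y2 t * (1/2)))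
        + ((b * t) + ((T1 - t) * ((T1 - t) * (c * (1/2))))) := by
      funext t
      simp only [hV]
      ring
    rw [eV]
    have hT1t : ∃ K : NNReal, LipschitzOnWith K (fun t => T1 - t) (Icc T0 T1) := by
      apply exK_of_dist 1
      intro x hx y hy
      rw [one_mul, show T1 - x - (T1 - y) = -(x - y) by ring, abs_neg]
    have hbt : ∃ K : NNReal, LipschitzOnWith K (fun t => b * t) (Icc T0 T1) := by
      apply exK_of_dist |b|
      intro x hx y hy
      rw [show b*x - b*y = b*(x-y) by ring, abs_mul]
    exact exK_add (exK_sub hz2s (exK_mul (hx0t T0 T1) (exK_mul ⟨_, hy2s⟩ (exK_const _))))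
      (exK_add hbt (exK_mul hT1t (exK_mul hT1t (exK_const _))))
  have hVd : ∀ᵐ t ∂(volume.restrict (Icc T0 T1)), ∃ d, HasDerivAt V d t ∧ d ≤ 0 := by
    filter_upwards [ae_restrict_of_ae_restrict_of_subset
      (Icc_subset_Icc_left hT0) hh2, ae_restrict_mem measurableSet_Icc] with t ht2 htI
    obtain ⟨yd2, hy2d, hz2d⟩ := ht2
    have hxd : HasDerivAt (fun u : ℝ => x0 + u) 1 t := (hasDerivAt_id t).const_add x0
    have hprod := (hxd.mul hy2d).mul_const (1/2 : ℝ)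
    have hbt : HasDerivAt (fun u => b * u) (b * 1) t := (hasDerivAt_id t).const_mul b
    have hT1t : HasDerivAt (fun u : ℝ => T1 - u) (-1 : ℝ) t := (hasDerivAt_id t).const_sub T1
    have hsq := ((hT1t.pow 2).const_mul c).mul_const (1/2 : ℝ)
    refine ⟨_, ((hz2d.sub hprod).add hbt).add hsq, ?_⟩
    have hy2lb : b - c * (T1 - t) ≤ y2 t := by
      have h1 := hdist y2 T1 hy2 T1 hmemT1 t ⟨hT0.trans htI.1, htI.2⟩
      have hnn : (0:ℝ) ≤ T1 - t := by linarith only [htI.2]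
      rw [abs_of_nonneg hnn] at h1
      have := (abs_le.1 h1).2
      linarith only [this]
    norm_num
    push_cast
    linarith only [hy2lb]
  have hBkey := key hle hVlip hVd
  have hB : z2 T1 - (x0 + T1) * b * (1/2) + b * T1 ≤
      z2 T0 - (x0 + T0) * g0 * (1/2) + b * T0 + c * Δ^2 * (1/2) := by
    have h1 : V T1 = z2 T1 - (x0 + T1) * b * (1/2) + b * T1 := by
      simp only [hV, hb]
      ring
    have h2 : V T0 = z2 T0 - (x0 + T0) * g0 * (1/2) + b * T0 + c * Δ^2 * (1/2) := by
      simp only [hV, hg0, hΔ]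
    rw [h1, h2] at hBkey
    exact hBkey
  -- assemble: qz ≤ -D^2/(4c) - Δ*qy/2 + cΔ²/2
  have hB' : (z2 T1 - (x0 + T1) * b * (1/2) + b * T1)
      - (z2 T0 - (x0 + T0) * g0 * (1/2) + b * T0 + c * Δ^2 * (1/2)) ≤ 0 := by
    linarith only [hB]
  have hqzub : qz ≤ -(D^2/(4*c)) - Δ * qy / 2 + c * Δ^2 / 2 := by
    have e : qz = ((z2 T1 - (x0 + T1) * b * (1/2) + b * T1)
        - (z2 T0 - (x0 + T0) * g0 * (1/2) + b * T0 + c * Δ^2 * (1/2)))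
        + (z2 T0 - z1 T0 - ((x0 + T0) * D / 2 - D^2 / (4*c)))
        + (-(D^2/(4*c)) - Δ * qy / 2 + c * Δ^2 / 2) := by
      rw [hqz, hqy, hΔ, hD, hg0, ha, hb]
      ring
    rw [e]
    linarith only [hA, hB']
  exact tailArith c D Δ qy qz hc hΔ0 hqzub hH1 hH2 hDlow hqypos

lemma lipOn_neg {K : NNReal} {f : ℝ → ℝ} {s : Set ℝ} (hf : LipschitzOnWith K f s) :
    LipschitzOnWith K (fun t => -f t) s :=
  LipschitzOnWith.of_dist_le_mul fun x hx y hy =>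
    (dist_neg_neg (f x) (f y)) ▸ hf.dist_le_mul x hx y hy

lemma main2 (c x0 T0 T1 : ℝ) (hc : 0 < c) (hT0 : 0 ≤ T0) (hle : T0 ≤ T1)
    (y1 z1 y2 z2 : ℝ → ℝ)
    (hy1 : LipschitzOnWith c.toNNReal y1 (Icc 0 T0))
    (hy2 : LipschitzOnWith c.toNNReal y2 (Icc 0 T1))
    (hz1 : ∃ K : NNReal, LipschitzOnWith K z1 (Icc 0 T0))
    (hz2 : ∃ K : NNReal, LipschitzOnWith K z2 (Icc 0 T1))
    (hy0 : y1 0 = y2 0) (hz0 : z1 0 = z2 0)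
    (horder : (∀ t ∈ Icc 0 T0, y1 t ≤ y2 t) ∨ (∀ t ∈ Icc 0 T0, y2 t ≤ y1 t))
    (hh1 : ∀ᵐ t ∂(volume.restrict (Icc 0 T0)),
      ∃ yd, HasDerivAt y1 yd t ∧ HasDerivAt z1 (((x0 + t) * yd - y1 t) / 2) t)
    (hh2 : ∀ᵐ t ∂(volume.restrict (Icc 0 T1)),
      ∃ yd, HasDerivAt y2 yd t ∧ HasDerivAt z2 (((x0 + t) * yd - y2 t) / 2) t)
    (H : max (4 * c * |T1 - T0|)
        (Real.sqrt (32 * c * |z2 T1 - z1 T0 + (y1 T0 * (x0 + T1) - (x0 + T0) * y2 T1) / 2|))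
        < |y2 T1 - y1 T0|) : False := by
  rcases horder with ho | ho
  · exact core c x0 T0 T1 hc hT0 hle y1 z1 y2 z2 hy1 hy2 hz1 hz2 hy0 hz0 ho hh1 hh2 H
  · apply core c x0 T0 T1 hc hT0 hle (fun t => -y1 t) (fun t => -z1 t)
      (fun t => -y2 t) (fun t => -z2 t) (lipOn_neg hy1) (lipOn_neg hy2)
      (hz1.imp fun K hK => lipOn_neg hK) (hz2.imp fun K hK => lipOn_neg hK)
      (by show -y1 0 = -y2 0; rw [hy0]) (by show -z1 0 = -z2 0; rw [hz0])
      (fun t ht => neg_le_neg (ho t ht))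
    · filter_upwards [hh1] with t ht
      obtain ⟨yd, hyd, hzd⟩ := ht
      refine ⟨-yd, hyd.neg, ?_⟩
      have h2 := hzd.neg
      have e : -(((x0 + t) * yd - y1 t) / 2) = ((x0 + t) * (-yd) - (-(y1 t))) / 2 := by ring
      rw [e] at h2
      exact h2
    · filter_upwards [hh2] with t ht
      obtain ⟨yd, hyd, hzd⟩ := ht
      refine ⟨-yd, hyd.neg, ?_⟩
      have h2 := hzd.neg
      have e : -(((x0 + t) * yd - y2 t) / 2) = ((x0 + t) * (-yd) - (-(y2 t))) / 2 := by ring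
      rw [e] at h2
      exact h2
    · rw [show (-z2 T1) - (-z1 T0) + ((-y1 T0) * (x0 + T1) - (x0 + T0) * (-y2 T1)) / 2
          = -(z2 T1 - z1 T0 + (y1 T0 * (x0 + T1) - (x0 + T0) * y2 T1) / 2) by ring,
        abs_neg,
        show (-y2 T1) - (-y1 T0) = -(y2 T1 - y1 T0) by ring, abs_neg]
      exact H


set_option maxHeartbeats 1000000 in
/-- if two unit `x`-speed horizontal Lipschitz curves start at the same
point, have `y`-coordinates Lipschitz with constant `< c`, and their projections do not
cross, then the Heisenberg difference of their endpoints avoids the scale-invariant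
double cone `C = {|y| > max(4c|x|, √(32c|z|))}`. -/
theorem stmt11 (c : ℝ) (hc : 0 < c)
    (T : Fin 2 → ℝ) (hT : ∀ i, 0 ≤ T i)
    (α : Fin 2 → ℝ → ℝ × ℝ × ℝ)
    (hlip : ∀ i, ∃ K : NNReal, LipschitzOnWith K (α i) (Set.Icc 0 (T i)))
    (hx : ∀ i, ∀ t ∈ Set.Icc 0 (T i), (α i t).1 = (α i 0).1 + t)
    (hylip : ∀ i, ∃ c' : NNReal, (c' : ℝ) < c ∧
      LipschitzOnWith c' (fun t => (α i t).2.1) (Set.Icc 0 (T i)))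
    (hhoriz : ∀ i, ∀ᵐ t ∂(volume.restrict (Set.Icc 0 (T i))),
      ∃ xd yd : ℝ,
        HasDerivAt (fun u => (α i u).1) xd t ∧
        HasDerivAt (fun u => (α i u).2.1) yd t ∧
        HasDerivAt (fun u => (α i u).2.2)
          (((α i t).1 * yd - (α i t).2.1 * xd) / 2) t)
    (hstart : α 0 0 = α 1 0)
    (hnocross :
      (∀ t ∈ Set.Icc 0 (min (T 0) (T 1)), (α 0 t).2.1 ≤ (α 1 t).2.1) ∨
      (∀ t ∈ Set.Icc 0 (min (T 0) (T 1)), (α 1 t).2.1 ≤ (α 0 t).2.1)) :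
    hmul (hinv (α 0 (T 0))) (α 1 (T 1)) ∉
      {q : ℝ × ℝ × ℝ |
        max (4 * c * |q.1|) (Real.sqrt (32 * c * |q.2.2|)) < |q.2.1|} := by
  intro hmem
  set x0 : ℝ := (α 0 0).1 with hx0
  have hx0' : ∀ i, (α i 0).1 = x0 := by
    intro i
    fin_cases i
    · rfl
    · exact (congrArg Prod.fst hstart).symm
  -- y Lipschitz with constant c.toNNReal
  have hy : ∀ i, LipschitzOnWith c.toNNReal (fun t => (α i t).2.1) (Icc 0 (T i)) := by
    intro i
    obtain ⟨c', hc', hl⟩ := hylip i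
    apply LipschitzOnWith.of_dist_le_mul
    intro x hx y hy
    refine le_trans (hl.dist_le_mul x hx y hy) (mul_le_mul_of_nonneg_right ?_ dist_nonneg)
    rw [Real.coe_toNNReal c hc.le]
    exact hc'.le
  -- z Lipschitz
  have hz : ∀ i, ∃ K : NNReal, LipschitzOnWith K (fun t => (α i t).2.2) (Icc 0 (T i)) := by
    intro i
    obtain ⟨K, hK⟩ := hlip i
    apply exK_of_dist (K : ℝ)
    intro s hs u hu
    calc |(α i s).2.2 - (α i u).2.2| = dist (α i s).2.2 (α i u).2.2 := (Real.dist_eq _ _).symm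
      _ ≤ dist (α i s).2 (α i u).2 := by rw [Prod.dist_eq]; exact le_max_right _ _
      _ ≤ dist (α i s) (α i u) := by rw [Prod.dist_eq (x := α i s)]; exact le_max_right _ _
      _ ≤ K * dist s u := hK.dist_le_mul s hs u hu
      _ = K * |s - u| := by rw [Real.dist_eq]
  -- derivative form
  have hconv : ∀ i, ∀ᵐ t ∂(volume.restrict (Icc 0 (T i))),
      ∃ yd, HasDerivAt (fun u => (α i u).2.1) yd t ∧
        HasDerivAt (fun u => (α i u).2.2) (((x0 + t) * yd - (α i t).2.1) / 2) t := by
    intro i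
    filter_upwards [hhoriz i, ae_mem_Ioo, ae_restrict_mem measurableSet_Icc]
      with t ht htIoo htIcc
    obtain ⟨xd, yd, hxd, hyd, hzd⟩ := ht
    have hxx : ∀ u ∈ Icc 0 (T i), (α i u).1 = x0 + u := by
      intro u hu
      rw [hx i u hu, hx0' i]
    have hx1 : HasDerivAt (fun u => (α i u).1) 1 t := by
      have haff : HasDerivAt (fun u : ℝ => x0 + u) 1 t := (hasDerivAt_id t).const_add x0
      apply haff.congr_of_eventuallyEq
      filter_upwards [Ioo_mem_nhds htIoo.1 htIoo.2] with u hu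
      exact hxx u (Ioo_subset_Icc_self hu)
    have hxd1 : xd = 1 := hxd.unique hx1
    refine ⟨yd, hyd, ?_⟩
    rw [hxd1, mul_one] at hzd
    rw [hxx t htIcc] at hzd
    exact hzd
  -- start equalities
  have hy00 : (α 0 0).2.1 = (α 1 0).2.1 := by rw [hstart]
  have hz00 : (α 0 0).2.2 = (α 1 0).2.2 := by rw [hstart]
  -- endpoint x coordinates
  have hxe : ∀ i, (α i (T i)).1 = x0 + T i := by
    intro i
    rw [hx i (T i) ⟨hT i, le_refl _⟩, hx0' i]
  simp only [Set.mem_setOf_eq, hmul, hinv] at hmem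
  rw [hxe 0, hxe 1] at hmem
  rcases le_total (T 0) (T 1) with hle | hle
  · have hmin : min (T 0) (T 1) = T 0 := min_eq_left hle
    rw [hmin] at hnocross
    apply main2 c x0 (T 0) (T 1) hc (hT 0) hle
      (fun t => (α 0 t).2.1) (fun t => (α 0 t).2.2) (fun t => (α 1 t).2.1) (fun t => (α 1 t).2.2)
      (hy 0) (hy 1) (hz 0) (hz 1) hy00 hz00 hnocross (hconv 0) (hconv 1)
    rw [show -(x0 + T 0) + (x0 + T 1) = T 1 - T 0 by ring] at hmem
    rw [show -(α 0 (T 0)).2.1 + (α 1 (T 1)).2.1 = (α 1 (T 1)).2.1 - (α 0 (T 0)).2.1 by ring]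
      at hmem
    rw [show -(α 0 (T 0)).2.2 + (α 1 (T 1)).2.2
          + (-(x0 + T 0) * (α 1 (T 1)).2.1 - -(α 0 (T 0)).2.1 * (x0 + T 1)) / 2
        = (α 1 (T 1)).2.2 - (α 0 (T 0)).2.2
          + ((α 0 (T 0)).2.1 * (x0 + T 1) - (x0 + T 0) * (α 1 (T 1)).2.1) / 2 by ring] at hmem
    exact hmem
  · have hmin : min (T 0) (T 1) = T 1 := min_eq_right hle
    rw [hmin] at hnocross
    apply main2 c x0 (T 1) (T 0) hc (hT 1) hle
      (fun t => (α 1 t).2.1) (fun t => (α 1 t).2.2) (fun t => (α 0 t).2.1) (fun t => (α 0 t).2.2)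
      (hy 1) (hy 0) (hz 1) (hz 0) hy00.symm hz00.symm hnocross.symm (hconv 1) (hconv 0)
    rw [show -(x0 + T 0) + (x0 + T 1) = -(T 0 - T 1) by ring, abs_neg] at hmem
    rw [show -(α 0 (T 0)).2.1 + (α 1 (T 1)).2.1
        = -((α 0 (T 0)).2.1 - (α 1 (T 1)).2.1) by ring, abs_neg] at hmem
    rw [show -(α 0 (T 0)).2.2 + (α 1 (T 1)).2.2
          + (-(x0 + T 0) * (α 1 (T 1)).2.1 - -(α 0 (T 0)).2.1 * (x0 + T 1)) / 2
        = -((α 0 (T 0)).2.2 - (α 1 (T 1)).2.2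
          + ((α 1 (T 1)).2.1 * (x0 + T 0) - (x0 + T 1) * (α 0 (T 0)).2.1) / 2) by ring, abs_neg]
      at hmem
    exact hmem
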